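/- For subsets U ⊆ V of measurements of a causal measurement scenario M, the set of histories Hist(M_U) of the restricted scenario M_U is a subset of Hist(M_V) that is downward closed under set inclusion: if s ∈ Hist(M_V), t ∈ Hist(M_U), and s ⊆ t, then s ∈ Hist(M_U). -/
import Mathlib


/-- A causal measurement scenario: a type of measurements `X`, outcome sets
`O x`, and an enabling relation from sets of events to measurements. -/
structure CMS (X Ω : Type*) where
  O : X → Set Ω
  enab : Set (X × Ω) → X → Prop

namespace CMS

variable {X Ω : Type*}

/-- A set of events is consistent if it is the graph of a partial function. -/
def consistent (s : Set (X × Ω)) : Prop :=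
  ∀ x o o', (x, o) ∈ s → (x, o') ∈ s → o = o'

/-- The domain of a set of events: the measurements performed. -/
def domain (s : Set (X × Ω)) : Set X := {x | ∃ o, (x, o) ∈ s}

/-- Accessibility: `x` may be performed after the events in `s`. -/
def acc (M : CMS X Ω) (s : Set (X × Ω)) (x : X) : Prop :=
  x ∉ domain s ∧ ∃ t ⊆ s, M.enab t x

/-- Histories: the least family containing `∅` and closed under adjoining
an event `(x, o)` for accessible `x` and `o ∈ O x`. -/
inductive Hist (M : CMS X Ω) : Set (X × Ω) → Prop
  | empty : Hist M ∅
  | step {s : Set (X × Ω)} {x : X} {o : Ω} :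
      Hist M s → M.acc s x → o ∈ M.O x → Hist M (s ∪ {(x, o)})

/-- A strategy for Nature: a (nonempty) downward-closed set of histories,
deterministic and total: unique outcome responses to accessible measurements. -/
structure IsStrategy (M : CMS X Ω) (σ : Set (Set (X × Ω))) : Prop where
  nonempty : σ.Nonempty
  hist : ∀ s ∈ σ, M.Hist s
  dc : ∀ s t : Set (X × Ω), M.Hist s → s ⊆ t → t ∈ σ → s ∈ σ
  resp : ∀ s ∈ σ, ∀ x : X, M.acc s x →
    ∃! o : Ω, o ∈ M.O x ∧ s ∪ {(x, o)} ∈ σ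

/-- The restriction `M_U` of a scenario to a subset `U` of measurements. -/
def restrict (M : CMS X Ω) (U : Set X) : CMS X Ω where
  O := M.O
  enab := fun s x => M.enab s x ∧ domain s ∪ {x} ⊆ U

end CMS

open CMS

lemma hist_restrict_domain_subset {X Ω : Type*} (M : CMS X Ω) (U : Set X)
    {t : Set (X × Ω)} (ht : (M.restrict U).Hist t) : domain t ⊆ U := by
  induction ht with
  | empty => rintro x ⟨o, h⟩; exact absurd h (Set.notMem_empty _)
  | step hs hacc ho ih =>
    rintro y ⟨o', hy⟩
    rcases hy with hy | hy
    · exact ih ⟨o', hy⟩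
    · obtain ⟨t', -, -, hsub⟩ := hacc.2
      cases hy
      exact hsub (Or.inr rfl)

/-- For `U ⊆ V`, `Hist(M_U)` is a down-closed subset of `Hist(M_V)`. -/
theorem hist_restrict_mono_and_downclosed {X Ω : Type*} (M : CMS X Ω)
    (U V : Set X) (hUV : U ⊆ V) :
    (∀ s : Set (X × Ω), (M.restrict U).Hist s → (M.restrict V).Hist s) ∧
    (∀ s t : Set (X × Ω), (M.restrict V).Hist s → (M.restrict U).Hist t →
      s ⊆ t → (M.restrict U).Hist s) := by
  constructor
  · intro s hs
    induction hs with
    | empty => exact Hist.empty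
    | step hs' hacc ho ih =>
      refine Hist.step ih ⟨hacc.1, ?_⟩ ho
      obtain ⟨t', ht's, he, hsub⟩ := hacc.2
      exact ⟨t', ht's, he, fun y hy => hUV (hsub hy)⟩
  · intro s t hs ht hst
    have hdom : domain t ⊆ U := hist_restrict_domain_subset M U ht
    induction hs with
    | empty => exact Hist.empty
    | @step s' x o hs' hacc ho ih =>
      have hs't : s' ⊆ t := fun y hy => hst (Or.inl hy)
      refine Hist.step (ih hs't) ⟨hacc.1, ?_⟩ ho
      obtain ⟨t', ht's, he, -⟩ := hacc.2
      refine ⟨t', ht's, he, ?_⟩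
      rintro y (hy | hy)
      · obtain ⟨o', hy⟩ := hy
        exact hdom ⟨o', hs't (ht's hy)⟩
      · cases hy
        exact hdom ⟨o, hst (Or.inr rfl)⟩
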